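/- Let X be a finite metric space with integer-valued metric d and a probability measure. Suppose b: [0,1] → [0,1] is such that for every set A ⊆ X, the measure of the internal boundary IB(A) = { a ∈ A : ∃x ∉ A, d(a,x) ≤ 1 } is at least b(vol(A)). Then for every set A ⊆ X, the measure of the external boundary EB(A) = { x ∉ A : ∃a ∈ A, d(a,x) ≤ 1 } is at least inf { b(μ') : μ' − b(μ') ≥ vol(A) }. -/

import Mathlib

/-- External boundary lower bounds follow from internal boundary lower bounds,
in any finite space with an integer-valued metric and a probability measure. -/
theorem external_boundary_from_internal (X : Type*) [Fintype X] [DecidableEq X]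
    (d : X → X → ℕ)
    (hd_self : ∀ x, d x x = 0)
    (hd_eq : ∀ x y, d x y = 0 → x = y)
    (hd_symm : ∀ x y, d x y = d y x)
    (hd_tri : ∀ x y z, d x z ≤ d x y + d y z)
    (w : X → ℝ) (hw : ∀ x, 0 ≤ w x) (hsum : ∑ x, w x = 1)
    (b : ℝ → ℝ)
    (hb : ∀ A : Finset X,
        b (∑ a ∈ A, w a) ≤ ∑ a ∈ A.filter (fun a => ∃ x, x ∉ A ∧ d a x ≤ 1), w a) :
    ∀ A : Finset X,
      sInf {y : ℝ | ∃ μ' ∈ Set.Icc (0 : ℝ) 1,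
              (∑ a ∈ A, w a) ≤ μ' - b μ' ∧ y = b μ'}
        ≤ ∑ x ∈ Finset.univ.filter (fun x => x ∉ A ∧ ∃ a ∈ A, d a x ≤ 1), w x := by
  classical
  intro A
  set EB := Finset.univ.filter (fun x => x ∉ A ∧ ∃ a ∈ A, d a x ≤ 1) with hEB
  set A' : Finset X := A ∪ EB with hA'
  set μ' := ∑ a ∈ A', w a with hμ'
  have hμ0 : 0 ≤ μ' := Finset.sum_nonneg (fun x _ => hw x)
  have hμ1 : μ' ≤ 1 := by
    rw [hμ', ← hsum]
    exact Finset.sum_le_sum_of_subset_of_nonneg (Finset.subset_univ _) (fun x _ _ => hw x)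
  have hIB_sub : A'.filter (fun a => ∃ x, x ∉ A' ∧ d a x ≤ 1) ⊆ EB := by
    intro a ha
    simp only [Finset.mem_filter] at ha
    obtain ⟨haA', x, hxA', hdx⟩ := ha
    have haA : a ∉ A := by
      intro haA
      apply hxA'
      apply Finset.mem_union_right
      simp only [hEB, Finset.mem_filter, Finset.mem_univ, true_and]
      exact ⟨fun hx => hxA' (Finset.mem_union_left _ hx), a, haA,
        hdx⟩
    rcases Finset.mem_union.mp haA' with h | h
    · exact absurd h haA
    · exact h
  have hIBle : ∑ a ∈ A'.filter (fun a => ∃ x, x ∉ A' ∧ d a x ≤ 1), w a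
      ≤ ∑ x ∈ EB, w x :=
    Finset.sum_le_sum_of_subset_of_nonneg hIB_sub (fun x _ _ => hw x)
  have hbA' := hb A'
  rw [← hμ'] at hbA'
  have hbμ : b μ' ≤ ∑ x ∈ EB, w x := le_trans hbA' hIBle
  have hA_le : (∑ a ∈ A, w a) ≤ μ' - b μ' := by
    have hsub : A ⊆ A' \ A'.filter (fun a => ∃ x, x ∉ A' ∧ d a x ≤ 1) := by
      intro a ha
      rw [Finset.mem_sdiff]
      refine ⟨Finset.mem_union_left _ ha, fun hmem => ?_⟩
      have := hIB_sub hmem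
      simp only [hEB, Finset.mem_filter] at this
      exact this.2.1 ha
    have h1 : (∑ a ∈ A, w a)
        ≤ ∑ a ∈ A' \ A'.filter (fun a => ∃ x, x ∉ A' ∧ d a x ≤ 1), w a :=
      Finset.sum_le_sum_of_subset_of_nonneg hsub (fun x _ _ => hw x)
    have h2 : ∑ a ∈ A' \ A'.filter (fun a => ∃ x, x ∉ A' ∧ d a x ≤ 1), w a
        = μ' - ∑ a ∈ A'.filter (fun a => ∃ x, x ∉ A' ∧ d a x ≤ 1), w a := by
      rw [Finset.sum_sdiff_eq_sub (Finset.filter_subset _ _), hμ']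
    linarith
  have hmem : b μ' ∈ {y : ℝ | ∃ μ'' ∈ Set.Icc (0 : ℝ) 1,
      (∑ a ∈ A, w a) ≤ μ'' - b μ'' ∧ y = b μ''} :=
    ⟨μ', ⟨hμ0, hμ1⟩, hA_le, rfl⟩
  by_cases hbdd : BddBelow {y : ℝ | ∃ μ'' ∈ Set.Icc (0 : ℝ) 1,
      (∑ a ∈ A, w a) ≤ μ'' - b μ'' ∧ y = b μ''}
  · exact le_trans (csInf_le hbdd hmem) hbμ
  · rw [show {y : ℝ | ∃ μ' ∈ Set.Icc (0 : ℝ) 1,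
        (∑ a ∈ A, w a) ≤ μ' - b μ' ∧ y = b μ'} = {y : ℝ | ∃ μ'' ∈ Set.Icc (0 : ℝ) 1,
        (∑ a ∈ A, w a) ≤ μ'' - b μ'' ∧ y = b μ''} from rfl,
      Real.sInf_of_not_bddBelow hbdd]
    exact Finset.sum_nonneg (fun x _ => hw x)
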